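/- Let N ~ Binomial(n, λ/n) with λ > 0 and n ≥ λ, and let M ~ Poisson(λ). Then N is convexly smaller than M: E[f(N)] ≤ E[f(M)] for every convex function f : ℝ → ℝ for which both expectations are finite. -/

import Mathlib

open MeasureTheory

namespace BinPoiAux

noncomputable def p (lam : ℝ) (n k : ℕ) : ℝ :=
  (n.choose k : ℝ) * (lam / n) ^ k * (1 - lam / n) ^ (n - k)

noncomputable def q (lam : ℝ) (k : ℕ) : ℝ :=
  Real.exp (-lam) * lam ^ k / k.factorial

variable {lam : ℝ} {n : ℕ}

lemma npos (hlam : 0 < lam) (hn : lam ≤ n) : 0 < n := by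
  by_contra h
  push_neg at h
  interval_cases n
  simp at hn; linarith

lemma xnonneg (hlam : 0 < lam) (hn : lam ≤ n) : 0 ≤ lam / n :=
  div_nonneg hlam.le (Nat.cast_nonneg n)

lemma ynonneg (hlam : 0 < lam) (hn : lam ≤ n) : 0 ≤ 1 - lam / n := by
  have h0 : (0:ℝ) < n := by exact_mod_cast npos hlam hn
  rw [sub_nonneg, div_le_one h0]; exact hn

lemma p_nonneg (hlam : 0 < lam) (hn : lam ≤ n) (k : ℕ) : 0 ≤ p lam n k := by
  unfold p
  have := xnonneg hlam hn; have := ynonneg hlam hn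
  positivity

lemma q_pos (hlam : 0 < lam) (k : ℕ) : 0 < q lam k := by
  unfold q
  positivity

lemma p_eq_zero {k : ℕ} (hk : n < k) : p lam n k = 0 := by
  unfold p
  rw [Nat.choose_eq_zero_of_lt hk]
  simp

lemma sum_p_finset (hlam : 0 < lam) (hn : lam ≤ n) :
    ∑ k ∈ Finset.range (n+1), p lam n k = 1 := by
  unfold p
  have h : ∑ k ∈ Finset.range (n+1), (n.choose k : ℝ) * (lam / n) ^ k * (1 - lam / n) ^ (n - k)
      = (lam / n + (1 - lam / n)) ^ n := by
    rw [add_pow]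
    exact Finset.sum_congr rfl fun k _ => by ring
  rw [h]
  norm_num

lemma sum_p (hlam : 0 < lam) (hn : lam ≤ n) : ∑' k, p lam n k = 1 := by
  rw [tsum_eq_sum (s := Finset.range (n+1)) (fun b hb => p_eq_zero (by simpa using hb))]
  exact sum_p_finset hlam hn

lemma summable_p : Summable (p lam n) :=
  summable_of_ne_finset_zero (s := Finset.range (n+1))
    (fun b hb => p_eq_zero (by simpa using hb))

lemma kp_eq_zero {k : ℕ} (hk : n < k) : (k:ℝ) * p lam n k = 0 := by rw [p_eq_zero hk, mul_zero]

lemma summable_kp : Summable (fun k : ℕ => (k:ℝ) * p lam n k) :=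
  summable_of_ne_finset_zero (s := Finset.range (n+1))
    (fun b hb => kp_eq_zero (by simpa using hb))

lemma mean_p (hlam : 0 < lam) (hn : lam ≤ n) : ∑' k : ℕ, (k:ℝ) * p lam n k = lam := by
  have hn0 : 0 < n := npos hlam hn
  rw [tsum_eq_sum (s := Finset.range (n+1)) (fun b hb => kp_eq_zero (by simpa using hb))]
  unfold p
  rw [Finset.sum_range_succ' (fun k => (k:ℝ) * ((n.choose k : ℝ) * (lam / n) ^ k * (1 - lam / n) ^ (n - k)))]
  simp only [Nat.cast_zero, zero_mul, add_zero]
  obtain ⟨m, rfl⟩ : ∃ m, n = m + 1 := ⟨n - 1, (Nat.succ_pred_eq_of_pos hn0).symm⟩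
  have key : ∀ j ∈ Finset.range (m+1),
      ((j+1 : ℕ):ℝ) * (((m+1).choose (j+1) : ℝ) * (lam / ((m:ℕ)+1:ℕ)) ^ (j+1) * (1 - lam / ((m:ℕ)+1:ℕ)) ^ ((m+1) - (j+1)))
      = (((m:ℝ)+1) * (lam / ((m:ℕ)+1:ℕ))) * ((m.choose j : ℝ) * (lam / ((m:ℕ)+1:ℕ)) ^ j * (1 - lam / ((m:ℕ)+1:ℕ)) ^ (m - j)) := by
    intro j hj
    have hc : ((m+1).choose (j+1) : ℝ) * ((j:ℝ)+1) = ((m:ℝ)+1) * (m.choose j) := by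
      have := Nat.add_one_mul_choose_eq m j
      exact_mod_cast congrArg (Nat.cast (R := ℝ)) this.symm
    have hsub : (m + 1) - (j + 1) = m - j := by omega
    rw [hsub, pow_succ]
    push_cast
    linear_combination ((lam/((m:ℝ)+1))^j * (lam/((m:ℝ)+1)) * (1 - lam/((m:ℝ)+1))^(m-j)) * hc
  rw [Finset.sum_congr rfl key, ← Finset.mul_sum]
  have hb : ∑ j ∈ Finset.range (m+1), ((m.choose j : ℝ) * (lam / ((m:ℕ)+1:ℕ)) ^ j * (1 - lam / ((m:ℕ)+1:ℕ)) ^ (m - j))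
      = 1 := by
    have h : ∑ k ∈ Finset.range (m+1), (m.choose k : ℝ) * (lam / ((m:ℕ)+1:ℕ)) ^ k * (1 - lam / ((m:ℕ)+1:ℕ)) ^ (m - k)
        = (lam / ((m:ℕ)+1:ℕ) + (1 - lam / ((m:ℕ)+1:ℕ))) ^ m := by
      rw [add_pow]
      exact Finset.sum_congr rfl fun k _ => by ring
    rw [h]; norm_num
  rw [hb, mul_one]
  have : ((m:ℝ)+1) ≠ 0 := by positivity
  push_cast
  field_simp


lemma hasSum_q (hlam : 0 < lam) : HasSum (q lam) 1 := by
  have h := ProbabilityTheory.poissonPMFRealSum lam.toNNReal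
  have hc : (lam.toNNReal : ℝ) = lam := Real.coe_toNNReal lam hlam.le
  convert h using 2 with k
  unfold q
  rw [hc]

lemma summable_q (hlam : 0 < lam) : Summable (q lam) := (hasSum_q hlam).summable

lemma sum_q (hlam : 0 < lam) : ∑' k, q lam k = 1 := (hasSum_q hlam).tsum_eq

lemma kq_succ (hlam : 0 < lam) (k : ℕ) :
    ((k+1 : ℕ):ℝ) * q lam (k+1) = lam * q lam k := by
  unfold q
  rw [pow_succ, Nat.factorial_succ]
  push_cast
  have h1 : (k.factorial : ℝ) ≠ 0 := by positivity
  field_simp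

lemma summable_kq (hlam : 0 < lam) : Summable (fun k : ℕ => (k:ℝ) * q lam k) := by
  rw [← summable_nat_add_iff 1]
  have h2 : (fun n : ℕ => ((n+1:ℕ):ℝ) * q lam (n+1)) = fun k => lam * q lam k :=
    funext (kq_succ hlam)
  rw [h2]
  exact (summable_q hlam).mul_left lam

lemma mean_q (hlam : 0 < lam) : ∑' k : ℕ, (k:ℝ) * q lam k = lam := by
  rw [(summable_kq hlam).tsum_eq_zero_add]
  simp only [Nat.cast_zero, zero_mul, zero_add]
  have : (fun k : ℕ => ((k:ℝ)+1) * q lam (k+1)) = fun k => lam * q lam k := by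
    ext k
    have := kq_succ hlam k
    push_cast at this
    exact this
  push_cast
  rw [this, tsum_mul_left, sum_q hlam, mul_one]


lemma step (hlam : 0 < lam) (hn : lam ≤ n) {k : ℕ} (hk : k < n) :
    p lam n (k+1) * q lam k * ((n:ℝ) - lam) = p lam n k * q lam (k+1) * ((n:ℝ) - k) := by
  have hn0' : (0:ℝ) < n := lt_of_lt_of_le hlam hn
  unfold p q
  have hsub : n - k = (n - (k+1)) + 1 := by omega
  have hc : ((n.choose (k+1)):ℝ) * ((k:ℝ)+1) = (n.choose k : ℝ) * ((n:ℝ) - k) := by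
    have h' := congrArg (Nat.cast (R := ℝ)) (Nat.choose_succ_right_eq n k)
    push_cast [Nat.cast_sub hk.le] at h'
    exact h' 
  rw [hsub, pow_succ, pow_succ, Nat.factorial_succ]
  have hf : (k.factorial : ℝ) ≠ 0 := by positivity
  have hk1 : ((k:ℝ)+1) ≠ 0 := by positivity
  push_cast
  field_simp
  linear_combination (lam^(k+1) * ((n:ℝ) - lam) * (((n:ℝ) - lam) / n)^(n-(k+1))) * hc


lemma mono1 (hlam : 0 < lam) (hn : lam ≤ n) {k : ℕ} (hk : (k:ℝ) < lam) :
    p lam n k * q lam (k+1) ≤ p lam n (k+1) * q lam k := by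
  have hkn : k < n := by exact_mod_cast lt_of_lt_of_le hk hn
  by_cases hln : lam < n
  · have hstep := step hlam hn hkn
    have h0 : 0 ≤ p lam n k * q lam (k+1) := mul_nonneg (p_nonneg hlam hn k) (q_pos hlam _).le
    have h1 : (0:ℝ) < (n:ℝ) - lam := by linarith
    have h2 : p lam n k * q lam (k+1) * ((n:ℝ) - lam) ≤ p lam n (k+1) * q lam k * ((n:ℝ) - lam) := by
      rw [hstep]
      have : (n:ℝ) - lam ≤ (n:ℝ) - k := by linarith
      nlinarith
    exact le_of_mul_le_mul_right h2 h1
  · have hle : lam = n := le_antisymm hn (not_lt.1 hln)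
    have hpk : p lam n k = 0 := by
      unfold p
      have hy : 1 - lam / n = 0 := by
        have hn0 : (n:ℝ) ≠ 0 := by
          have : (0:ℝ) < n := lt_of_lt_of_le hlam hn
          linarith
        rw [hle, div_self hn0, sub_self]
      rw [hy, zero_pow (by omega)]
      ring
    rw [hpk, zero_mul]
    exact mul_nonneg (p_nonneg hlam hn _) (q_pos hlam _).le

lemma mono2 (hlam : 0 < lam) (hn : lam ≤ n) {k : ℕ} (hk : lam ≤ (k:ℝ)) :
    p lam n (k+1) * q lam k ≤ p lam n k * q lam (k+1) := by
  by_cases hkn : k < n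
  · have hln : lam < n := lt_of_le_of_lt hk (by exact_mod_cast hkn)
    have hstep := step hlam hn hkn
    have h0 : 0 ≤ p lam n k * q lam (k+1) := mul_nonneg (p_nonneg hlam hn k) (q_pos hlam _).le
    have h1 : (0:ℝ) < (n:ℝ) - lam := by linarith
    have h2 : p lam n (k+1) * q lam k * ((n:ℝ) - lam) ≤ p lam n k * q lam (k+1) * ((n:ℝ) - lam) := by
      rw [hstep]
      have : (n:ℝ) - (k:ℝ) ≤ (n:ℝ) - lam := by linarith
      nlinarith
    exact le_of_mul_le_mul_right h2 h1
  · have : p lam n (k+1) = 0 := p_eq_zero (by omega)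
    rw [this, zero_mul]
    exact mul_nonneg (p_nonneg hlam hn k) (q_pos hlam _).le

noncomputable def r (lam : ℝ) (n k : ℕ) : ℝ := p lam n k / q lam k

lemma r_mono_up (hlam : 0 < lam) (hn : lam ≤ n) :
    ∀ b a : ℕ, a ≤ b → (b:ℝ) ≤ lam → r lam n a ≤ r lam n b := by
  intro b
  induction b with
  | zero => intro a ha _; interval_cases a; exact le_refl _
  | succ b ih =>
    intro a ha hb
    rcases Nat.eq_or_lt_of_le ha with h | h
    · rw [h]
    · have h1 : a ≤ b := by omega
      have hb' : (b:ℝ) ≤ lam := by push_cast at hb ⊢; linarith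
      refine le_trans (ih a h1 hb') ?_
      unfold r
      rw [div_le_div_iff₀ (q_pos hlam b) (q_pos hlam (b+1))]
      exact mono1 hlam hn (by push_cast at hb ⊢; linarith)

lemma r_mono_down (hlam : 0 < lam) (hn : lam ≤ n) :
    ∀ b a : ℕ, a ≤ b → lam ≤ (a:ℝ) → r lam n b ≤ r lam n a := by
  intro b
  induction b with
  | zero => intro a ha _; interval_cases a; exact le_refl _
  | succ b ih =>
    intro a ha hha
    rcases Nat.eq_or_lt_of_le ha with h | h
    · rw [h]
    · have h1 : a ≤ b := by omega
      refine le_trans ?_ (ih a h1 hha)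
      unfold r
      rw [div_le_div_iff₀ (q_pos hlam (b+1)) (q_pos hlam b)]
      have : lam ≤ (b:ℝ) := le_trans hha (by exact_mod_cast h1)
      exact mono2 hlam hn this

lemma sign (hlam : 0 < lam) (hn : lam ≤ n) {j k l : ℕ} (hjk : j ≤ k) (hkl : k ≤ l)
    (hj : q lam j < p lam n j) (hl : q lam l < p lam n l) : q lam k ≤ p lam n k := by
  have hrk : (1:ℝ) ≤ r lam n k → q lam k ≤ p lam n k := by
    intro h
    have := (one_le_div (q_pos hlam k)).1 h
    linarith
  by_cases hc : (k:ℝ) ≤ lam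
  · apply hrk
    refine le_trans ?_ (r_mono_up hlam hn k j hjk hc)
    unfold r
    rw [le_div_iff₀ (q_pos hlam j)]
    linarith
  · apply hrk
    push_neg at hc
    refine le_trans ?_ (r_mono_down hlam hn l k hkl hc.le)
    unfold r
    rw [le_div_iff₀ (q_pos hlam l)]
    linarith


section Chord
variable {f : ℝ → ℝ} {a c x : ℝ}

lemma chord_le (hf : ConvexOn ℝ Set.univ f) (hac : a < c) (h1 : a ≤ x) (h2 : x ≤ c) :
    f x ≤ f a + (f c - f a) / (c - a) * (x - a) := by
  rcases eq_or_lt_of_le h1 with rfl | h1'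
  · simp
  rcases eq_or_lt_of_le h2 with rfl | h2'
  · rw [div_mul_cancel₀]
    · linarith
    · linarith
  have hs := hf.slope_mono_adjacent (Set.mem_univ a) (Set.mem_univ c) h1' h2'
  rw [div_le_div_iff₀ (by linarith) (by linarith)] at hs
  rw [← sub_le_iff_le_add', div_mul_eq_mul_div, le_div_iff₀ (by linarith)]
  nlinarith

lemma le_chord_right (hf : ConvexOn ℝ Set.univ f) (hac : a < c) (h2 : c ≤ x) :
    f a + (f c - f a) / (c - a) * (x - a) ≤ f x := by
  rcases eq_or_lt_of_le h2 with rfl | h2'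
  · rw [div_mul_cancel₀]
    · linarith
    · linarith
  have hs := hf.slope_mono_adjacent (Set.mem_univ a) (Set.mem_univ x) hac h2'
  rw [div_le_div_iff₀ (by linarith) (by linarith)] at hs
  rw [add_comm, ← le_sub_iff_add_le, div_mul_eq_mul_div, div_le_iff₀ (by linarith)]
  nlinarith

lemma le_chord_left (hf : ConvexOn ℝ Set.univ f) (hac : a < c) (h1 : x ≤ a) :
    f a + (f c - f a) / (c - a) * (x - a) ≤ f x := by
  rcases eq_or_lt_of_le h1 with rfl | h1'
  · simp
  have hs := hf.slope_mono_adjacent (Set.mem_univ x) (Set.mem_univ c) h1' hac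
  rw [div_le_div_iff₀ (by linarith) (by linarith)] at hs
  rw [add_comm, ← le_sub_iff_add_le, div_mul_eq_mul_div, div_le_iff₀ (by linarith)]
  nlinarith

end Chord


lemma bridge {Ω : Type*} {mΩ : MeasurableSpace Ω} (μ : Measure Ω)
    (N : Ω → ℕ) (hN : Measurable N) (P : ℕ → ℝ) (hP : ∀ k, 0 ≤ P k)
    (hdist : ∀ k : ℕ, μ {ω | N ω = k} = ENNReal.ofReal (P k))
    (f : ℝ → ℝ) (hf : Integrable (fun ω => f (N ω)) μ) :
    (∫ ω, f (N ω) ∂μ = ∑' k : ℕ, P k * f (k:ℝ)) ∧ Summable (fun k : ℕ => P k * |f (k:ℝ)|) := by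
  set g : ℕ → ℝ := fun k => f (k:ℝ) with hg
  have hgm : AEStronglyMeasurable g (μ.map N) :=
    (measurable_from_top (f := g)).stronglyMeasurable.aestronglyMeasurable
  have hmapk : ∀ k : ℕ, (μ.map N) {k} = ENNReal.ofReal (P k) := by
    intro k
    rw [Measure.map_apply hN (measurableSet_singleton k)]
    exact hdist k
  have hint : Integrable g (μ.map N) := by
    rw [integrable_map_measure hgm hN.aemeasurable]
    exact hf
  constructor
  · rw [← integral_map hN.aemeasurable hgm, integral_countable' hint]
    exact tsum_congr fun k => by
      rw [measureReal_def, hmapk k, ENNReal.toReal_ofReal (hP k), smul_eq_mul]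
  · have hfin : ∫⁻ k, (‖g k‖₊ : ENNReal) ∂(μ.map N) ≠ ⊤ := hint.2.ne
    rw [lintegral_countable'] at hfin
    have hsum := ENNReal.summable_toReal hfin
    refine hsum.congr fun k => ?_
    rw [hmapk k, ENNReal.toReal_mul, ENNReal.toReal_ofReal (hP k), ENNReal.coe_toReal,
      coe_nnnorm, Real.norm_eq_abs, mul_comm]

end BinPoiAux

open BinPoiAux in
/-- Binomial(n, λ/n) is convexly smaller than Poisson(λ). -/
theorem binomial_cx_le_poisson {Ω : Type*} {mΩ : MeasurableSpace Ω}
    (μ : Measure Ω) [IsProbabilityMeasure μ]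
    (lam : ℝ) (hlam : 0 < lam) (n : ℕ) (hn : lam ≤ n)
    (N M : Ω → ℕ) (hN : Measurable N) (hM : Measurable M)
    (hNdist : ∀ k : ℕ,
      μ {ω | N ω = k} = ENNReal.ofReal
        ((n.choose k : ℝ) * (lam / n) ^ k * (1 - lam / n) ^ (n - k)))
    (hMdist : ∀ k : ℕ,
      μ {ω | M ω = k} = ENNReal.ofReal (Real.exp (-lam) * lam ^ k / k.factorial)) :
    ∀ f : ℝ → ℝ, ConvexOn ℝ Set.univ f →
      Integrable (fun ω => f (N ω)) μ → Integrable (fun ω => f (M ω)) μ →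
      ∫ ω, f (N ω) ∂μ ≤ ∫ ω, f (M ω) ∂μ := by
  intro f hconv hNint hMint
  set P : ℕ → ℝ := p lam n with hPdef
  set Q : ℕ → ℝ := q lam with hQdef
  have hPnn : ∀ k, 0 ≤ P k := p_nonneg hlam hn
  have hQpos : ∀ k, 0 < Q k := q_pos hlam
  obtain ⟨hNI, hNS⟩ := bridge μ N hN P hPnn (fun k => hNdist k) f hNint
  obtain ⟨hMI, hMS⟩ := bridge μ M hM Q (fun k => (hQpos k).le) (fun k => hMdist k) f hMint
  rw [hNI, hMI]
  have SPf : Summable (fun k : ℕ => P k * f (k:ℝ)) :=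
    Summable.of_abs (hNS.congr fun k => by rw [abs_mul, abs_of_nonneg (hPnn k)])
  have SQf : Summable (fun k : ℕ => Q k * f (k:ℝ)) :=
    Summable.of_abs (hMS.congr fun k => by rw [abs_mul, abs_of_nonneg (hQpos k).le])
  by_cases hall : ∀ k, P k ≤ Q k
  · -- then P = Q and the integrals agree
    have hPQ : ∀ k, P k = Q k := by
      intro k
      by_contra hne
      have hlt : P k < Q k := lt_of_le_of_ne (hall k) hne
      have h2 := Summable.tsum_lt_tsum hall hlt summable_p (summable_q hlam)
      rw [hPdef, hQdef, sum_p hlam hn, sum_q hlam] at h2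
      exact absurd h2 (lt_irrefl 1)
    exact le_of_eq (tsum_congr fun k => by rw [hPQ k])
  · push_neg at hall
    obtain ⟨k0, hk0⟩ := hall
    have hk0n : k0 ≤ n := by
      by_contra h
      push_neg at h
      have : P k0 = 0 := p_eq_zero h
      rw [this] at hk0
      exact absurd (lt_trans (hQpos k0) hk0) (lt_irrefl 0)
    set T : Finset ℕ := (Finset.range (n+1)).filter (fun k => Q k < P k) with hTdef
    have hk0T : k0 ∈ T := by
      rw [hTdef, Finset.mem_filter, Finset.mem_range]
      exact ⟨by omega, hk0⟩
    have hTne : T.Nonempty := ⟨k0, hk0T⟩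
    set a : ℕ := T.min' hTne with hadef
    set b : ℕ := T.max' hTne with hbdef
    have haT : a ∈ T := T.min'_mem hTne
    have hbT : b ∈ T := T.max'_mem hTne
    have ha : Q a < P a := (Finset.mem_filter.1 haT).2
    have hb : Q b < P b := (Finset.mem_filter.1 hbT).2
    have hab : a ≤ b := T.min'_le b hbT
    set c : ℕ := max b (a+1) with hcdef
    have hac : a < c := lt_of_lt_of_le (Nat.lt_succ_self a) (le_max_right b (a+1))
    have hbc : b ≤ c := le_max_left b (a+1)
    have hcb1 : c ≤ b + 1 := by omega
    have hacR : (a:ℝ) < (c:ℝ) := by exact_mod_cast hac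
    set s : ℝ := (f c - f a) / ((c:ℝ) - (a:ℝ)) with hsdef
    set L : ℝ → ℝ := fun x => f a + s * (x - a) with hLdef
    set g : ℕ → ℝ := fun k => f (k:ℝ) - L (k:ℝ) with hgdef
    have hout : ∀ k, (k < a ∨ b < k) → P k ≤ Q k := by
      intro k hk
      by_contra h
      push_neg at h
      have hkn : k ≤ n := by
        by_contra h2
        push_neg at h2
        have hz : P k = 0 := p_eq_zero h2
        rw [hz] at h
        exact absurd (lt_trans (hQpos k) h) (lt_irrefl 0)
      have hkT : k ∈ T := by
        rw [hTdef, Finset.mem_filter, Finset.mem_range]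
        exact ⟨by omega, h⟩
      rcases hk with hk | hk
      · exact absurd (T.min'_le k hkT) (by omega)
      · exact absurd (T.le_max' k hkT) (by omega)
    have key : ∀ k, 0 ≤ (Q k - P k) * g k := by
      intro k
      rcases lt_or_ge k a with hka | hka
      · have h1 : P k ≤ Q k := hout k (Or.inl hka)
        have h2 : 0 ≤ g k := by
          rw [hgdef, hLdef]
          simp only [sub_nonneg]
          exact le_chord_left hconv hacR (by exact_mod_cast hka.le)
        exact mul_nonneg (by linarith) h2
      · rcases le_or_gt k b with hkb | hkb
        · have h1 : Q k ≤ P k := sign hlam hn hka hkb ha hb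
          have h2 : g k ≤ 0 := by
            rw [hgdef, hLdef]
            simp only [sub_nonpos]
            refine chord_le hconv hacR (by exact_mod_cast hka) ?_
            have : k ≤ c := le_trans hkb hbc
            exact_mod_cast this
          nlinarith
        · have h1 : P k ≤ Q k := hout k (Or.inr hkb)
          have h2 : 0 ≤ g k := by
            rw [hgdef, hLdef]
            simp only [sub_nonneg]
            refine le_chord_right hconv hacR ?_
            have : c ≤ k := by omega
            exact_mod_cast this
          exact mul_nonneg (by linarith) h2
    have SkP : Summable (fun k : ℕ => (k:ℝ) * P k) := summable_kp
    have SkQ : Summable (fun k : ℕ => (k:ℝ) * Q k) := summable_kq hlam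
    have SP : Summable P := summable_p
    have SQ : Summable Q := summable_q hlam
    have SPL : Summable (fun k : ℕ => P k * L (k:ℝ)) := by
      refine (((SP.mul_left (f a - s * a)).add (SkP.mul_left s))).congr fun k => ?_
      rw [hLdef]
      ring
    have SQL : Summable (fun k : ℕ => Q k * L (k:ℝ)) := by
      refine (((SQ.mul_left (f a - s * a)).add (SkQ.mul_left s))).congr fun k => ?_
      rw [hLdef]
      ring
    have tPL : ∑' k : ℕ, P k * L (k:ℝ) = (f a - s * a) + s * lam := by
      have h1 : (fun k : ℕ => P k * L (k:ℝ))
          = fun k : ℕ => (f a - s * a) * P k + s * ((k:ℝ) * P k) := by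
        funext k
        rw [hLdef]
        ring
      rw [h1, Summable.tsum_add (SP.mul_left _) (SkP.mul_left s), tsum_mul_left, tsum_mul_left,
        hPdef, sum_p hlam hn, mean_p hlam hn, mul_one]
    have tQL : ∑' k : ℕ, Q k * L (k:ℝ) = (f a - s * a) + s * lam := by
      have h1 : (fun k : ℕ => Q k * L (k:ℝ))
          = fun k : ℕ => (f a - s * a) * Q k + s * ((k:ℝ) * Q k) := by
        funext k
        rw [hLdef]
        ring
      rw [h1, Summable.tsum_add (SQ.mul_left _) (SkQ.mul_left s), tsum_mul_left, tsum_mul_left,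
        hQdef, sum_q hlam, mean_q hlam, mul_one]
    have hfun : (fun k : ℕ => (Q k - P k) * g k)
        = fun k : ℕ => (Q k * f (k:ℝ) - Q k * L (k:ℝ)) - (P k * f (k:ℝ) - P k * L (k:ℝ)) := by
      funext k
      rw [hgdef]
      ring
    have htsum : ∑' k : ℕ, (Q k - P k) * g k
        = (∑' k : ℕ, Q k * f (k:ℝ) - ∑' k : ℕ, Q k * L (k:ℝ))
          - (∑' k : ℕ, P k * f (k:ℝ) - ∑' k : ℕ, P k * L (k:ℝ)) := by
      rw [hfun, Summable.tsum_sub (SQf.sub SQL) (SPf.sub SPL), Summable.tsum_sub SQf SQL, Summable.tsum_sub SPf SPL]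
    have hnn : 0 ≤ ∑' k : ℕ, (Q k - P k) * g k := tsum_nonneg key
    rw [htsum, tPL, tQL] at hnn
    linarith
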